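/- arXiv:1604.04002 — 2 statements merged into one kernel-verified Lean document; each statement's English description precedes it below -/
import Mathlib

section
/- Let A, Â ∈ ℝ^{d×d} with |Â − A|_∞ ≤ u♯ for some u♯ > 0, let S = supp(A) be nonempty, and let Ŝ = {(m,k) : |Â_{mk}| > u♯}. Suppose moreover that the weak-signal condition |{(m,k) : 0 < |A_{mk}| ≤ 2u♯}| ≤ |S| · L · (2u♯)^β holds for some L, β > 0. Then the false negative rate satisfies FNR = |Ŝᶜ ∩ S| / |S| ≤ 2^β L u♯^β. -/
open Finset Real in
/-- FNR bound under the weak-signal condition: if |Â − A|_∞ ≤ u♯, S = supp(A) ≠ ∅,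
Ŝ = {(m,k) : |Â_{mk}| > u♯}, and the number of nonzero entries of A with magnitude at most
2u♯ is at most |S|·L·(2u♯)^β, then |Ŝᶜ ∩ S| / |S| ≤ 2^β · L · u♯^β. -/
theorem stmt8 {d : ℕ} (A Ahat : Matrix (Fin d) (Fin d) ℝ) (usharp L β : ℝ)
    (hu : 0 < usharp) (hL : 0 < L) (hβ : 0 < β)
    (hclose : ∀ m k, |Ahat m k - A m k| ≤ usharp)
    (S : Finset (Fin d × Fin d))
    (hS : S = Finset.univ.filter (fun p : Fin d × Fin d => A p.1 p.2 ≠ 0))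
    (hSne : S.Nonempty)
    (Shat : Finset (Fin d × Fin d))
    (hShat : Shat = Finset.univ.filter (fun p : Fin d × Fin d => usharp < |Ahat p.1 p.2|))
    (hweak : ((Finset.univ.filter (fun p : Fin d × Fin d =>
        0 < |A p.1 p.2| ∧ |A p.1 p.2| ≤ 2 * usharp)).card : ℝ)
        ≤ (S.card : ℝ) * L * (2 * usharp) ^ β) :
    ((Shatᶜ ∩ S).card : ℝ) / (S.card : ℝ) ≤ 2 ^ β * L * usharp ^ β := by
  have hsub : Shatᶜ ∩ S ⊆ Finset.univ.filter (fun p : Fin d × Fin d =>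
      0 < |A p.1 p.2| ∧ |A p.1 p.2| ≤ 2 * usharp) := by
    intro p hp
    simp only [Finset.mem_inter, Finset.mem_compl, hS, hShat, Finset.mem_filter,
      Finset.mem_univ, true_and] at hp ⊢
    obtain ⟨h1, h2⟩ := hp
    push_neg at h1
    refine ⟨abs_pos.mpr h2, ?_⟩
    have := hclose p.1 p.2
    have : |A p.1 p.2| ≤ |Ahat p.1 p.2| + |Ahat p.1 p.2 - A p.1 p.2| := by
      have := abs_sub_abs_le_abs_sub (A p.1 p.2) (Ahat p.1 p.2)
      rw [abs_sub_comm] at this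
      linarith
    linarith [hclose p.1 p.2]
  have hcard : ((Shatᶜ ∩ S).card : ℝ) ≤ (S.card : ℝ) * L * (2 * usharp) ^ β :=
    le_trans (by exact_mod_cast Finset.card_le_card hsub) hweak
  have hSpos : (0 : ℝ) < S.card := by exact_mod_cast Finset.card_pos.mpr hSne
  rw [div_le_iff₀ hSpos]
  calc ((Shatᶜ ∩ S).card : ℝ) ≤ (S.card : ℝ) * L * (2 * usharp) ^ β := hcard
    _ = 2 ^ β * L * usharp ^ β * S.card := by
        rw [Real.mul_rpow (by norm_num) hu.le]; ring
end

section
/- Let A ∈ ℝ^{d×d} satisfy max_j ∑_m |A_{jm}|^α ≤ s for some 0 ≤ α < 1 and s > 0, and let Â ∈ ℝ^{d×d} satisfy |Â − A|_∞ ≤ δ and row-wise ℓ¹ domination |Â_{j·}|₁ ≤ |A_{j·}|₁ for all j. Then with u = 2δ, every row satisfies ∑_m |Â_{jm} − A_{jm}| ≤ 4 s (2δ)^{1−α}. -/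
open Real in
/-- Row-wise ℓ¹ rate under weak sparsity: if max_j ∑_m |A_{jm}|^α ≤ s with 0 ≤ α < 1
(convention 0^α = 0 also for α = 0), |Â − A|_∞ ≤ δ, and each row of Â has ℓ¹ norm at most
that of A, then every row satisfies ∑_m |Â_{jm} − A_{jm}| ≤ 4·s·(2δ)^{1−α}. -/
theorem stmt16 {d : ℕ} (A Ahat : Matrix (Fin d) (Fin d) ℝ) (s α δ : ℝ)
    (hs : 0 < s) (hα0 : 0 ≤ α) (hα1 : α < 1) (hδ : 0 < δ)
    (hsparse : ∀ j, ∑ m, (if A j m = 0 then (0 : ℝ) else |A j m| ^ α) ≤ s)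
    (hclose : ∀ j m, |Ahat j m - A j m| ≤ δ)
    (hl1 : ∀ j, ∑ m, |Ahat j m| ≤ ∑ m, |A j m|) :
    ∀ j, ∑ m, |Ahat j m - A j m| ≤ 4 * s * (2 * δ) ^ (1 - α) := by
  intro j
  set u : ℝ := 2 * δ with hu
  have hu0 : (0:ℝ) < u := by positivity
  have h1α : (0:ℝ) ≤ 1 - α := by linarith
  have hupow : (0:ℝ) < u ^ (1 - α) := Real.rpow_pos_of_pos hu0 _
  set p : Fin d → Prop := fun m => u < |A j m| with hp
  have hpd : DecidablePred p := fun m => Real.decidableLT _ _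
  set T : Finset (Fin d) := Finset.univ.filter p with hT
  set Tc : Finset (Fin d) := Finset.univ.filter (fun m => ¬ p m) with hTc
  have hsn := hsparse j
  have hsnonneg : ∀ m ∈ (Finset.univ : Finset (Fin d)), m ∉ T →
      (0:ℝ) ≤ (if A j m = 0 then (0 : ℝ) else |A j m| ^ α) := by
    intro m _ _
    split
    · exact le_refl 0
    · positivity
  -- card bound on T
  have hTcard : (T.card : ℝ) * u ^ α ≤ s := by
    calc (T.card : ℝ) * u ^ α = ∑ _m ∈ T, u ^ α := by
          rw [Finset.sum_const, nsmul_eq_mul]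
      _ ≤ ∑ m ∈ T, (if A j m = 0 then (0 : ℝ) else |A j m| ^ α) := by
          apply Finset.sum_le_sum
          intro m hm
          have hm' : u < |A j m| := (Finset.mem_filter.mp hm).2
          have hne : A j m ≠ 0 := by
            intro h
            rw [h, abs_zero] at hm'
            linarith
          rw [if_neg hne]
          exact Real.rpow_le_rpow hu0.le hm'.le hα0
      _ ≤ ∑ m, (if A j m = 0 then (0 : ℝ) else |A j m| ^ α) :=
          Finset.sum_le_sum_of_subset_of_nonneg (Finset.subset_univ T) hsnonneg
      _ ≤ s := hsn
  -- error on T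
  have hsumT : ∑ m ∈ T, |Ahat j m - A j m| ≤ s * u ^ (1 - α) / 2 := by
    have h1 : ∑ m ∈ T, |Ahat j m - A j m| ≤ (T.card : ℝ) * δ := by
      calc ∑ m ∈ T, |Ahat j m - A j m| ≤ ∑ _m ∈ T, δ :=
            Finset.sum_le_sum (fun m _ => hclose j m)
        _ = (T.card : ℝ) * δ := by rw [Finset.sum_const, nsmul_eq_mul]
    have h2 : (T.card : ℝ) * u ≤ s * u ^ (1 - α) := by
      have h3 : (T.card : ℝ) * u ^ α * u ^ (1 - α) ≤ s * u ^ (1 - α) :=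
        mul_le_mul_of_nonneg_right hTcard hupow.le
      calc (T.card : ℝ) * u = (T.card : ℝ) * (u ^ α * u ^ (1 - α)) := by
            rw [← Real.rpow_add hu0]
            norm_num
        _ = (T.card : ℝ) * u ^ α * u ^ (1 - α) := by ring
        _ ≤ s * u ^ (1 - α) := h3
    have : (T.card : ℝ) * δ = (T.card : ℝ) * u / 2 := by rw [hu]; ring
    linarith
  -- tail bound on Tc
  have hsumTc : ∑ m ∈ Tc, |A j m| ≤ s * u ^ (1 - α) := by
    have hterm : ∀ m ∈ Tc,
        |A j m| ≤ u ^ (1 - α) * (if A j m = 0 then (0 : ℝ) else |A j m| ^ α) := by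
      intro m hm
      have hm' : ¬ u < |A j m| := (Finset.mem_filter.mp hm).2
      have hle : |A j m| ≤ u := le_of_not_gt hm'
      by_cases hz : A j m = 0
      · rw [if_pos hz, hz, abs_zero, mul_zero]
      · rw [if_neg hz]
        have hpos : (0:ℝ) < |A j m| := abs_pos.mpr hz
        have : |A j m| = |A j m| ^ (1 - α) * |A j m| ^ α := by
          rw [← Real.rpow_add hpos]
          norm_num
        calc |A j m| = |A j m| ^ (1 - α) * |A j m| ^ α := this
          _ ≤ u ^ (1 - α) * |A j m| ^ α :=
            mul_le_mul_of_nonneg_right (Real.rpow_le_rpow hpos.le hle h1α)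
              (Real.rpow_nonneg hpos.le α)
    calc ∑ m ∈ Tc, |A j m|
        ≤ ∑ m ∈ Tc, u ^ (1 - α) * (if A j m = 0 then (0 : ℝ) else |A j m| ^ α) :=
          Finset.sum_le_sum hterm
      _ = u ^ (1 - α) * ∑ m ∈ Tc, (if A j m = 0 then (0 : ℝ) else |A j m| ^ α) := by
          rw [Finset.mul_sum]
      _ ≤ u ^ (1 - α) * s := by
          apply mul_le_mul_of_nonneg_left _ hupow.le
          calc ∑ m ∈ Tc, (if A j m = 0 then (0 : ℝ) else |A j m| ^ α)
              ≤ ∑ m, (if A j m = 0 then (0 : ℝ) else |A j m| ^ α) := by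
                apply Finset.sum_le_sum_of_subset_of_nonneg (Finset.subset_univ Tc)
                intro m _ _
                split
                · exact le_refl 0
                · positivity
            _ ≤ s := hsn
      _ = s * u ^ (1 - α) := by ring
  -- splits
  have split1 : ∑ m ∈ T, |Ahat j m - A j m| + ∑ m ∈ Tc, |Ahat j m - A j m|
      = ∑ m, |Ahat j m - A j m| := Finset.sum_filter_add_sum_filter_not _ _ _
  have split2 : ∑ m ∈ T, |Ahat j m| + ∑ m ∈ Tc, |Ahat j m|
      = ∑ m, |Ahat j m| := Finset.sum_filter_add_sum_filter_not _ _ _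
  have split3 : ∑ m ∈ T, |A j m| + ∑ m ∈ Tc, |A j m|
      = ∑ m, |A j m| := Finset.sum_filter_add_sum_filter_not _ _ _
  -- triangle inequalities
  have htri1 : ∑ m ∈ Tc, |Ahat j m - A j m| ≤ ∑ m ∈ Tc, |Ahat j m| + ∑ m ∈ Tc, |A j m| := by
    rw [← Finset.sum_add_distrib]
    exact Finset.sum_le_sum (fun m _ => abs_sub (Ahat j m) (A j m))
  have htri2 : ∑ m ∈ T, |A j m| ≤ ∑ m ∈ T, |Ahat j m| + ∑ m ∈ T, |Ahat j m - A j m| := by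
    rw [← Finset.sum_add_distrib]
    apply Finset.sum_le_sum
    intro m _
    have := abs_sub_abs_le_abs_sub (A j m) (Ahat j m)
    have h := abs_sub_comm (A j m) (Ahat j m)
    linarith
  have hl1' := hl1 j
  have hgoal : ∑ m, |Ahat j m - A j m| ≤ 3 * (s * u ^ (1 - α)) := by
    nlinarith [hsumT, hsumTc, htri1, htri2]
  have hnn : 0 ≤ s * u ^ (1 - α) := le_of_lt (mul_pos hs hupow)
  calc ∑ m, |Ahat j m - A j m| ≤ 3 * (s * u ^ (1 - α)) := hgoal
    _ ≤ 4 * s * u ^ (1 - α) := by linarith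
end
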